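/- Let Γ = ⟨ω, R, ∈⟩ be a countable random bipartite graph, τ : R → {+,−} a finite partial function, and G a finite set of automorphisms of Γ. Then there exists an infinite set B ⊆ B_τ such that for all (g, x) ≠ (g', x') in G × B, g(x) ≠ g'(x'), where B_τ = ⋂_{u ∈ dom τ} u^{τ(u)}, u⁺ = u, u⁻ = ω \ u. -/

import Mathlib

/-- The Boolean combination determined by the finite "pattern" given by positive
part `P` and negative part `N` (a finite partial function to `{+,-}`). -/
def BSigma (P N : Finset (Set ℕ)) : Set ℕ :=
  {x | (∀ A ∈ P, x ∈ A) ∧ (∀ A ∈ N, x ∉ A)}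

/-- The bipartite graph `⟨ω, R, ∈⟩` is random. -/
def SetRandom (R : Set (Set ℕ)) : Prop :=
  (∀ X Y : Finset ℕ, Disjoint X Y →
    {A ∈ R | (∀ x ∈ X, x ∈ A) ∧ (∀ y ∈ Y, y ∉ A)}.Infinite) ∧
  (∀ P N : Finset (Set ℕ), ↑P ⊆ R → ↑N ⊆ R → Disjoint P N → (BSigma P N).Infinite)

/-- A (side-respecting) automorphism of the bipartite graph `⟨ω, R, ∈⟩`:
by extensionality it is determined by a bijection of `ω` whose induced action
`A ↦ g '' A` is a bijection of `R`. -/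
def IsSetAuto (R : Set (Set ℕ)) (g : ℕ → ℕ) : Prop :=
  Function.Bijective g ∧ Set.BijOn (fun A => g '' A) R R

/-- `⟨ω, R, ∈⟩` is homogeneous: every finite partial side-respecting
automorphism (given by `p` on finitely many left vertices and `q` on finitely
many right vertices, preserving edges and non-edges) extends to a total
automorphism. -/
def SetHomog (R : Set (Set ℕ)) : Prop :=
  ∀ (s : Finset ℕ) (t : Finset (Set ℕ)), ↑t ⊆ R →
    ∀ (p : ℕ → ℕ) (q : Set ℕ → Set ℕ),
      Set.InjOn p ↑s → Set.InjOn q ↑t → (∀ A ∈ t, q A ∈ R) →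
      (∀ x ∈ s, ∀ A ∈ t, (x ∈ A ↔ p x ∈ q A)) →
      ∃ g : ℕ → ℕ, IsSetAuto R g ∧ (∀ x ∈ s, g x = p x) ∧ (∀ A ∈ t, g '' A = q A)

def SetComplete (R : Set (Set ℕ)) : Prop := ∀ A ∈ R, ∀ x : ℕ, x ∈ A

def SetEmptyG (R : Set (Set ℕ)) : Prop := ∀ A ∈ R, ∀ x : ℕ, x ∉ A

theorem exists_pair_set (R : Set (Set ℕ)) (hr : SetRandom R) (g g' : ℕ → ℕ)
    (hg : IsSetAuto R g) (hg' : IsSetAuto R g') (hne : g ≠ g') (T : Finset (Set ℕ)) :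
    ∃ A ∈ R, ∃ D ∈ R, A ∉ T ∧ D ∉ T ∧ A ≠ D ∧ ∀ x, x ∈ A → x ∉ D → g x ≠ g' x := by
  classical
  obtain ⟨n, hn⟩ := Function.ne_iff.mp hne
  obtain ⟨w, hw⟩ := hg'.1.2 (g n)
  have hwn : w ≠ n := by
    rintro rfl; exact hn hw.symm
  set D : Set ℕ → Set ℕ := fun A => g' ⁻¹' (g '' A) with hD
  have hDR : ∀ A ∈ R, D A ∈ R := by
    intro A hA
    obtain ⟨D₀, hD₀R, hD₀⟩ := hg'.2.surjOn (hg.2.mapsTo hA)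
    have : D A = D₀ := by
      simp only [hD]
      rw [← hD₀, Set.preimage_image_eq _ hg'.1.1]
    rw [this]; exact hD₀R
  have hDinj : Set.InjOn D R := by
    intro A₁ h₁ A₂ h₂ h
    have := congrArg (fun s => g' '' s) h
    simp only [hD, Set.image_preimage_eq _ hg'.1.2] at this
    exact Set.image_injective.mpr hg.1.1 this
  have hkey : ∀ A : Set ℕ, ∀ x, x ∈ A → x ∉ D A → g x ≠ g' x := by
    intro A x hx hxD heq
    exact hxD (by simp only [hD, Set.mem_preimage, ← heq]; exact ⟨x, hx, rfl⟩)
  have hADne : ∀ A : Set ℕ, n ∈ A → w ∉ A → A ≠ D A := by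
    intro A hnA hwA h
    have : w ∈ D A := by
      simp only [hD, Set.mem_preimage, hw]
      exact ⟨n, hnA, rfl⟩
    rw [← h] at this; exact hwA this
  have hdisj : Disjoint ({n} : Finset ℕ) ({w} : Finset ℕ) := by
    simpa using hwn.symm
  have hinf := hr.1 {n} {w} hdisj
  have hbad : ({A ∈ R | D A ∈ (↑T : Set (Set ℕ))}).Finite := by
    apply Set.Finite.of_finite_image (f := D)
    · exact T.finite_toSet.subset (by rintro _ ⟨A, ⟨hA, hAT⟩, rfl⟩; exact hAT)
    · exact hDinj.mono (fun A hA => hA.1)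
  have hinf2 := (hinf.diff (T.finite_toSet.union hbad))
  obtain ⟨A, hA⟩ := hinf2.nonempty
  obtain ⟨⟨hAR, hnA, hwA⟩, hA2⟩ := hA
  simp only [Set.mem_union, not_or, Set.mem_setOf_eq, Finset.mem_coe] at hA2
  refine ⟨A, hAR, D A, hDR A hAR, hA2.1, ?_, hADne A (hnA n (by simp)) (fun h => hwA w (by simp) h), hkey A⟩
  intro hDT
  exact hA2.2 ⟨hAR, hDT⟩

theorem exists_extension (R : Set (Set ℕ)) (hr : SetRandom R)
    (Q : Finset ((ℕ → ℕ) × (ℕ → ℕ)))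
    (hQ : ∀ p ∈ Q, IsSetAuto R p.1 ∧ IsSetAuto R p.2 ∧ p.1 ≠ p.2)
    (P N : Finset (Set ℕ)) (hP : ↑P ⊆ R) (hN : ↑N ⊆ R) (hPN : Disjoint P N) :
    ∃ P' N' : Finset (Set ℕ), ↑P' ⊆ R ∧ ↑N' ⊆ R ∧ Disjoint P' N' ∧
      P ⊆ P' ∧ N ⊆ N' ∧ ∀ x ∈ BSigma P' N', ∀ p ∈ Q, p.1 x ≠ p.2 x := by
  classical
  induction Q using Finset.induction_on with
  | empty => exact ⟨P, N, hP, hN, hPN, subset_rfl, subset_rfl, by simp⟩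
  | @insert q Q hq ih =>
    obtain ⟨P', N', hP', hN', hPN', hPP', hNN', hprop⟩ :=
      ih (fun p hp => hQ p (Finset.mem_insert_of_mem hp))
    obtain ⟨hq1, hq2, hq3⟩ := hQ q (Finset.mem_insert_self q Q)
    obtain ⟨A, hAR, D, hDR, hAT, hDT, hAD, hkey⟩ :=
      exists_pair_set R hr q.1 q.2 hq1 hq2 hq3 (P' ∪ N')
    refine ⟨insert A P', insert D N', ?_, ?_, ?_, ?_, ?_, ?_⟩
    · simp only [Finset.coe_insert, Set.insert_subset_iff]; exact ⟨hAR, hP'⟩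
    · simp only [Finset.coe_insert, Set.insert_subset_iff]; exact ⟨hDR, hN'⟩
    · have hA' : A ∉ insert D N' := by
        simp only [Finset.mem_insert, not_or]
        exact ⟨hAD, fun h => hAT (Finset.mem_union_right _ h)⟩
      have hD' : D ∉ P' := fun h => hDT (Finset.mem_union_left _ h)
      rw [Finset.disjoint_insert_left, Finset.disjoint_insert_right]
      exact ⟨hA', hD', hPN'⟩
    · exact hPP'.trans (Finset.subset_insert _ _)
    · exact hNN'.trans (Finset.subset_insert _ _)
    · intro x hx p hp
      have hxA : x ∈ A := hx.1 A (Finset.mem_insert_self _ _)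
      have hxD : x ∉ D := hx.2 D (Finset.mem_insert_self _ _)
      have hx' : x ∈ BSigma P' N' :=
        ⟨fun B hB => hx.1 B (Finset.mem_insert_of_mem hB),
         fun B hB => hx.2 B (Finset.mem_insert_of_mem hB)⟩
      rcases Finset.mem_insert.mp hp with rfl | hp
      · exact hkey x hxA hxD
      · exact hprop x hx' p hp
theorem finite_autos_injective_evaluation (R : Set (Set ℕ))
    (hc : R.Countable) (hr : SetRandom R)
    (P N : Finset (Set ℕ)) (hP : ↑P ⊆ R) (hN : ↑N ⊆ R) (hPN : Disjoint P N)
    (G : Finset (ℕ → ℕ)) (hG : ∀ g ∈ G, IsSetAuto R g) :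
    ∃ B ⊆ BSigma P N, B.Infinite ∧
      ∀ g ∈ G, ∀ g' ∈ G, ∀ x ∈ B, ∀ x' ∈ B,
        (g, x) ≠ (g', x') → g x ≠ g' x' := by
  classical
  set Q : Finset ((ℕ → ℕ) × (ℕ → ℕ)) := (G ×ˢ G).filter (fun p => p.1 ≠ p.2) with hQdef
  have hQ : ∀ p ∈ Q, IsSetAuto R p.1 ∧ IsSetAuto R p.2 ∧ p.1 ≠ p.2 := by
    intro p hp
    rw [hQdef, Finset.mem_filter, Finset.mem_product] at hp
    exact ⟨hG _ hp.1.1, hG _ hp.1.2, hp.2⟩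
  obtain ⟨P', N', hP', hN', hPN', hPP', hNN', hprop⟩ :=
    exists_extension R hr Q hQ P N hP hN hPN
  set S := BSigma P' N' with hSdef
  have hSinf : S.Infinite := hr.2 P' N' hP' hN' hPN'
  have hSsub : S ⊆ BSigma P N := fun x hx =>
    ⟨fun A hA => hx.1 A (hPP' hA), fun A hA => hx.2 A (hNN' hA)⟩
  have step : ∀ F : Finset ℕ,
      ∃ x, x ∈ S ∧ x ∉ F ∧ ∀ g ∈ G, ∀ g' ∈ G, ∀ y ∈ F, g x ≠ g' y := by
    intro F
    have hV : (⋃ g' ∈ G, g' '' (↑F : Set ℕ)).Finite :=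
      Set.Finite.biUnion G.finite_toSet (fun g' _ => F.finite_toSet.image g')
    have hBad : ((↑F : Set ℕ) ∪
        ⋃ g ∈ G, g ⁻¹' (⋃ g' ∈ G, g' '' (↑F : Set ℕ))).Finite := by
      refine F.finite_toSet.union
        (Set.Finite.biUnion G.finite_toSet (fun g hg => ?_))
      exact hV.preimage ((hG g hg).1.1.injOn)
    obtain ⟨x, hxS, hx2⟩ := (hSinf.diff hBad).nonempty
    refine ⟨x, hxS, fun h => hx2 (Set.mem_union_left _ h), ?_⟩
    intro g hg g' hg' y hy heq
    exact hx2 (Set.mem_union_right _ (Set.mem_biUnion hg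
      (show x ∈ g ⁻¹' _ from Set.mem_biUnion hg' ⟨y, hy, heq.symm⟩)))
  choose f hf1 hf2 hf3 using step
  let Fn : ℕ → Finset ℕ := fun n => Nat.rec ∅ (fun _ F => insert (f F) F) n
  have hmono : Monotone Fn := monotone_nat_of_le_succ (fun n => Finset.subset_insert _ _)
  set seq : ℕ → ℕ := fun n => f (Fn n) with hseqdef
  have hseqmem : ∀ m n, m < n → seq m ∈ Fn n := by
    intro m n h
    exact hmono h (Finset.mem_insert_self (f (Fn m)) (Fn m))
  have hinj : Function.Injective seq := by
    intro m n h
    by_contra hne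
    rcases Ne.lt_or_gt hne with hlt | hlt
    · have hm := hseqmem m n hlt; rw [h] at hm; exact hf2 (Fn n) hm
    · have hm := hseqmem n m hlt; rw [← h] at hm; exact hf2 (Fn m) hm
  refine ⟨Set.range seq, ?_, Set.infinite_range_of_injective hinj, ?_⟩
  · rintro _ ⟨n, rfl⟩; exact hSsub (hf1 (Fn n))
  · rintro g hg g' hg' x ⟨m, rfl⟩ x' ⟨k, rfl⟩ hne heq
    rcases lt_trichotomy m k with h | h | h
    · exact hf3 (Fn k) g' hg' g hg (seq m) (hseqmem m k h) heq.symm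
    · subst h
      have hgg : g ≠ g' := fun hh => hne (by rw [hh])
      have hQmem : (g, g') ∈ Q := by
        rw [hQdef, Finset.mem_filter, Finset.mem_product]
        exact ⟨⟨hg, hg'⟩, hgg⟩
      exact hprop (seq m) (hf1 (Fn m)) (g, g') hQmem heq
    · exact hf3 (Fn m) g hg g' hg' (seq k) (hseqmem k m h) heq
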